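/- For all real numbers L and b and every integer m ≥ 1, the function β ↦ sin³β · ((L + b·sin β)²·cos((m−1)β)·cos(mβ) − L²·cos β)/sin⁴(mβ) tends to −2bL/m⁴ as β tends to π (the limit taken along β ≠ π; note that sin(mβ) ≠ 0 for all β ≠ π sufficiently close to π). -/

import Mathlib

open Real Filter Topology

/-- The key limit in recovering Casimir's parallel-plate energy from the wedge
energy: as `β → π` (along `β ≠ π`),
`sin³β·((L + b·sin β)²·cos((m−1)β)·cos(mβ) − L²·cos β)/sin⁴(mβ) → −2bL/m⁴`. -/
theorem parallel_plate_key_limit (L b : ℝ) (m : ℕ) (hm : 1 ≤ m) :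
    Filter.Tendsto
      (fun β : ℝ =>
        Real.sin β ^ 3 *
            ((L + b * Real.sin β) ^ 2 * Real.cos (((m : ℝ) - 1) * β) *
                Real.cos ((m : ℝ) * β) -
              L ^ 2 * Real.cos β) /
          Real.sin ((m : ℝ) * β) ^ 4)
      (𝓝[≠] π) (𝓝 (-(2 * b * L) / (m : ℝ) ^ 4)) := by
  have hm0 : (m : ℝ) ≠ 0 := by
    exact_mod_cast Nat.one_le_iff_ne_zero.mp hm
  set c : ℝ := Real.cos ((m : ℝ) * π) with hc
  have hsinm : Real.sin ((m : ℝ) * π) = 0 := Real.sin_nat_mul_pi m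
  have hcastm1 : ((m : ℝ) - 1) = ((m - 1 : ℕ) : ℝ) := by
    have := Nat.cast_sub (R := ℝ) hm; push_cast at this ⊢; linarith
  have hsinm1 : Real.sin (((m : ℝ) - 1) * π) = 0 := by
    rw [hcastm1]; exact Real.sin_nat_mul_pi _
  have hcosm1 : Real.cos (((m : ℝ) - 1) * π) = -c := by
    have h : c = -Real.cos (((m : ℝ) - 1) * π) := by
      rw [hc, show (m : ℝ) * π = ((m : ℝ) - 1) * π + π by ring, Real.cos_add_pi]
    linarith
  have hc2 : c ^ 2 = 1 := by
    have := Real.sin_sq_add_cos_sq ((m : ℝ) * π)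
    rw [hsinm] at this; simpa [hc] using this
  have hc0 : c ≠ 0 := by
    intro h; rw [h] at hc2; norm_num at hc2
  have hmc0 : (m : ℝ) * c ≠ 0 := mul_ne_zero hm0 hc0
  -- Set N to be the numerator factor
  set N : ℝ → ℝ := fun β =>
    (L + b * Real.sin β) ^ 2 * Real.cos (((m : ℝ) - 1) * β) * Real.cos ((m : ℝ) * β) -
      L ^ 2 * Real.cos β with hN
  have hNpi : N π = 0 := by
    simp only [hN, Real.cos_pi, Real.sin_pi, hcosm1]
    linear_combination (-(L ^ 2)) * hc2
  -- derivative facts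
  have hds : HasDerivAt Real.sin (-1 : ℝ) π := by
    simpa using Real.hasDerivAt_sin π
  have hlin : HasDerivAt (fun β : ℝ => (m : ℝ) * β) (m : ℝ) π := by
    simpa using (hasDerivAt_id π).const_mul (m : ℝ)
  have hdsm : HasDerivAt (fun β : ℝ => Real.sin ((m : ℝ) * β)) ((m : ℝ) * c) π := by
    have h := (Real.hasDerivAt_sin ((m : ℝ) * π)).comp π hlin
    have h2 : HasDerivAt (fun β : ℝ => Real.sin ((m : ℝ) * β))
        (Real.cos ((m : ℝ) * π) * (m : ℝ)) π := h
    rw [hc, mul_comm]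
    exact h2
  have hlin1 : HasDerivAt (fun β : ℝ => ((m : ℝ) - 1) * β) ((m : ℝ) - 1) π := by
    simpa using (hasDerivAt_id π).const_mul ((m : ℝ) - 1)
  have hdc1 : HasDerivAt (fun β : ℝ => Real.cos (((m : ℝ) - 1) * β)) 0 π := by
    have := (Real.hasDerivAt_cos (((m : ℝ) - 1) * π)).comp π hlin1
    simp only [hsinm1, neg_zero, zero_mul] at this
    exact this
  have hdc2 : HasDerivAt (fun β : ℝ => Real.cos ((m : ℝ) * β)) 0 π := by
    have := (Real.hasDerivAt_cos ((m : ℝ) * π)).comp π hlin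
    simp only [hsinm, neg_zero, zero_mul] at this
    exact this
  have hdA : HasDerivAt (fun β : ℝ => (L + b * Real.sin β) ^ 2) (-(2 * b * L)) π := by
    have h1 : HasDerivAt (fun β : ℝ => L + b * Real.sin β) (b * -1) π :=
      (hds.const_mul b).const_add L
    have := h1.pow 2
    exact (this.congr_deriv (by simp [Real.sin_pi]; ring) :
      HasDerivAt (fun β : ℝ => (L + b * Real.sin β) ^ 2) (-(2 * b * L)) π)
  have hdN : HasDerivAt N (2 * b * L) π := by
    have hABC := (hdA.mul hdc1).mul hdc2
    have hD : HasDerivAt (fun β : ℝ => L ^ 2 * Real.cos β) 0 π := by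
      have := (Real.hasDerivAt_cos π).const_mul (L ^ 2)
      simpa [Real.sin_pi] using this
    have := hABC.sub hD
    have hval : (-(2 * b * L) * Real.cos (((m : ℝ) - 1) * π) + (L + b * Real.sin π) ^ 2 * 0) *
        Real.cos ((m : ℝ) * π) + (L + b * Real.sin π) ^ 2 * Real.cos (((m : ℝ) - 1) * π) * 0 - 0
        = 2 * b * L := by
      rw [hcosm1, Real.sin_pi]; linear_combination (2 * b * L) * hc2
    rw [Pi.mul_apply, hval] at this
    exact this
  -- slope limits
  have hslope1 : Tendsto (slope Real.sin π) (𝓝[≠] π) (𝓝 (-1 : ℝ)) :=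
    hasDerivAt_iff_tendsto_slope.mp hds
  have hslope2 : Tendsto (slope (fun β : ℝ => Real.sin ((m : ℝ) * β)) π) (𝓝[≠] π)
      (𝓝 ((m : ℝ) * c)) := hasDerivAt_iff_tendsto_slope.mp hdsm
  have hslopeN : Tendsto (slope N π) (𝓝[≠] π) (𝓝 (2 * b * L)) :=
    hasDerivAt_iff_tendsto_slope.mp hdN
  have hev : ∀ᶠ β in 𝓝[≠] π, β ≠ π := eventually_mem_nhdsWithin
  have T1 : Tendsto (fun β : ℝ => Real.sin β / Real.sin ((m : ℝ) * β)) (𝓝[≠] π)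
      (𝓝 ((-1) / ((m : ℝ) * c))) := by
    refine (hslope1.div hslope2 hmc0).congr' ?_
    filter_upwards [hev] with β hβ
    have hβ' : β - π ≠ 0 := sub_ne_zero.mpr hβ
    rw [Pi.div_apply, slope_def_field, slope_def_field, Real.sin_pi, hsinm, sub_zero, sub_zero,
      div_div_div_cancel_right₀ hβ']
  have T2 : Tendsto (fun β : ℝ => N β / Real.sin ((m : ℝ) * β)) (𝓝[≠] π)
      (𝓝 ((2 * b * L) / ((m : ℝ) * c))) := by
    refine (hslopeN.div hslope2 hmc0).congr' ?_
    filter_upwards [hev] with β hβ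
    have hβ' : β - π ≠ 0 := sub_ne_zero.mpr hβ
    rw [Pi.div_apply, slope_def_field, slope_def_field, hNpi, hsinm, sub_zero, sub_zero,
      div_div_div_cancel_right₀ hβ']
  have Tmain := (T1.pow 3).mul T2
  have hfun : ∀ β : ℝ, (Real.sin β / Real.sin ((m : ℝ) * β)) ^ 3 *
      (N β / Real.sin ((m : ℝ) * β)) =
      Real.sin β ^ 3 * N β / Real.sin ((m : ℝ) * β) ^ 4 := by
    intro β; rw [div_pow, div_mul_div_comm]; ring_nf
  have hlim : ((-1 : ℝ) / ((m : ℝ) * c)) ^ 3 * (2 * b * L / ((m : ℝ) * c)) =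
      -(2 * b * L) / (m : ℝ) ^ 4 := by
    have hc4 : c ^ 4 = 1 := by
      rw [show (4 : ℕ) = 2 * 2 from rfl, pow_mul, hc2, one_pow]
    rw [div_pow, div_mul_div_comm, ← pow_succ, mul_pow, hc4, mul_one]
    norm_num
  rw [← hlim]
  exact Tmain.congr fun β => hfun β
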